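/- arXiv:1708.00915 — 4 statements merged into one kernel-verified Lean document; each statement's English description precedes it below -/
import Mathlib

section
/- Let n ≥ 2 and let {W(t)}_{t≥0} be a sequence of column-stochastic n×n matrices, each of out-degree form, having the directed infinite flow property. Then for the push-sum iterates, for every t ≥ 0 and every i ∈ [n], |z_i(t+1) − x̄| ≤ (2‖x(0)‖₁ / y_i(t+1)) · Λ_{t,0}, where Λ_{t,0} = ∏_{q∈Q_{t,0}} (1 − 1/n^{ℓ_q}) and each factor 1 − 1/n^{ℓ_q} lies in (0,1). -/
open Finset MeasureTheory

/-- `A_{S S̄} = ∑_{i ∈ S, j ∉ S} A i j`. -/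
def flowSum {n : ℕ} (A : Matrix (Fin n) (Fin n) ℝ) (S : Finset (Fin n)) : ℝ :=
  ∑ i ∈ S, ∑ j ∈ Sᶜ, A i j

/-- `S` is a nontrivial subset of `[n]`. -/
def NontrivialSubset {n : ℕ} (S : Finset (Fin n)) : Prop :=
  S.Nonempty ∧ S ≠ Finset.univ

/-- Directed infinite flow property: for every nontrivial `S`, `∑_t A_{S S̄}(t) = ∞`. -/
def DirectedInfiniteFlow {n : ℕ} (A : ℕ → Matrix (Fin n) (Fin n) ℝ) : Prop :=
  ∀ S : Finset (Fin n), NontrivialSubset S →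
    Filter.Tendsto (fun T => ∑ t ∈ Finset.range T, flowSum (A t) S)
      Filter.atTop Filter.atTop

/-- The backward product `A(t:s) = A(t) A(t-1) ⋯ A(s)`. -/
def matProd {n : ℕ} (A : ℕ → Matrix (Fin n) (Fin n) ℝ) (t s : ℕ) :
    Matrix (Fin n) (Fin n) ℝ :=
  (((List.range (t + 1 - s)).map fun k => A (t - k))).prod

/-- Row-stochastic nonnegative matrix. -/
def RowStochastic {n : ℕ} (A : Matrix (Fin n) (Fin n) ℝ) : Prop :=
  (∀ i j, 0 ≤ A i j) ∧ ∀ i, ∑ j, A i j = 1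

/-- Column-stochastic nonnegative matrix. -/
def ColStochastic {n : ℕ} (A : Matrix (Fin n) (Fin n) ℝ) : Prop :=
  (∀ i j, 0 ≤ A i j) ∧ ∀ j, ∑ i, A i j = 1

/-- `W` is the degree-normalized adjacency matrix of a digraph with all self-loops:
`W i j = 1 / (out-degree of j)` if there is an edge from `j` to `i`, else `0`. -/
def OutDegreeForm {n : ℕ} (W : Matrix (Fin n) (Fin n) ℝ) : Prop :=
  ∃ N : Fin n → Finset (Fin n), (∀ j, j ∈ N j) ∧
    ∀ i j, W i j = if i ∈ N j then (1 : ℝ) / (N j).card else 0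

/-- Strong aperiodicity of a sequence of matrices. -/
def StronglyAperiodic {n : ℕ} (A : ℕ → Matrix (Fin n) (Fin n) ℝ) : Prop :=
  ∃ γ : ℝ, 0 < γ ∧ ∀ t i, γ ≤ A t i i

/-- The times `k_q`: `k_0 = 0` and `k_q` is the least `t' > k_{q-1}` with
nonzero flow `∑_{t=k_{q-1}}^{t'-1} A_{S S̄}(t) > 0` across every nontrivial cut. -/
noncomputable def kSeq {n : ℕ} (A : ℕ → Matrix (Fin n) (Fin n) ℝ) : ℕ → ℕ
  | 0 => 0
  | q + 1 => sInf {t' : ℕ | kSeq A q < t' ∧ ∀ S : Finset (Fin n), NontrivialSubset S →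
      0 < ∑ t ∈ Finset.Ico (kSeq A q) t', flowSum (A t) S}

/-- `ℓ_q = k_{qn} - k_{(q-1)n}`. -/
noncomputable def ellSeq {n : ℕ} (A : ℕ → Matrix (Fin n) (Fin n) ℝ) (q : ℕ) : ℕ :=
  kSeq A (q * n) - kSeq A ((q - 1) * n)

/-- The index set `Q_{t,s} = {q ≥ 1 : s ≤ k_{(q-1)n}, k_{qn} ≤ t}` (as a `Finset`). -/
noncomputable def QSet {n : ℕ} (A : ℕ → Matrix (Fin n) (Fin n) ℝ) (t s : ℕ) :
    Finset ℕ :=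
  (Finset.Icc 1 t).filter fun q => s ≤ kSeq A ((q - 1) * n) ∧ kSeq A (q * n) ≤ t

/-- `Λ_{t,s} = ∏_{q ∈ Q_{t,s}} (1 - 1/n^{ℓ_q})`. -/
noncomputable def Lam {n : ℕ} (A : ℕ → Matrix (Fin n) (Fin n) ℝ) (t s : ℕ) : ℝ :=
  ∏ q ∈ QSet A t s, (1 - 1 / (n : ℝ) ^ (ellSeq A q))

/-- Push-sum iterates: `u(0) = u0`, `u(t+1) = W(t) u(t)`. -/
def pushIter {n : ℕ} (W : ℕ → Matrix (Fin n) (Fin n) ℝ) (u0 : Fin n → ℝ) : ℕ → Fin n → ℝ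
  | 0 => u0
  | t + 1 => (W t).mulVec (pushIter W u0 t)

/-- A nonnegative matrix is irreducible if the digraph with an edge from `j` to `i`
whenever `A i j > 0` is strongly connected. -/
def IrreducibleMat {n : ℕ} (A : Matrix (Fin n) (Fin n) ℝ) : Prop :=
  ∀ i j : Fin n, Relation.ReflTransGen (fun a b => 0 < A b a) i j


section Aux
variable {n : ℕ}

/-- Right recursion: peel off the earliest matrix. -/
lemma matProd_right (W : ℕ → Matrix (Fin n) (Fin n) ℝ) {t s : ℕ} (h : s ≤ t) :
    matProd W t s = matProd W t (s + 1) * W s := by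
  unfold matProd
  have h1 : t + 1 - s = (t - s) + 1 := by omega
  have h2 : t + 1 - (s + 1) = t - s := by omega
  rw [h1, h2, List.range_succ, List.map_append, List.prod_append]
  simp [show t - (t - s) = s by omega]

/-- Left recursion: peel off the latest matrix. -/
lemma matProd_left (W : ℕ → Matrix (Fin n) (Fin n) ℝ) {t s : ℕ} (h : s ≤ t + 1) :
    matProd W (t + 1) s = W (t + 1) * matProd W t s := by
  unfold matProd
  have h1 : t + 1 + 1 - s = (t + 1 - s) + 1 := by omega
  have h2 : ((fun k => W (t + 1 - k)) ∘ Nat.succ) = fun k => W (t - k) := by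
    funext k
    simp [Nat.succ_sub_succ_eq_sub]
  rw [h1, List.range_succ_eq_map, List.map_cons, List.prod_cons, List.map_map, h2]
  norm_num

lemma matProd_empty (W : ℕ → Matrix (Fin n) (Fin n) ℝ) {t s : ℕ} (h : t + 1 ≤ s) :
    matProd W t s = 1 := by
  unfold matProd
  rw [show t + 1 - s = 0 by omega]
  rfl

lemma matProd_self (W : ℕ → Matrix (Fin n) (Fin n) ℝ) (t : ℕ) :
    matProd W t t = W t := by
  unfold matProd
  rw [show t + 1 - t = 1 by omega]
  simp [List.range_succ]

/-- Splitting a backward product at an intermediate time `r`. -/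
lemma matProd_split (W : ℕ → Matrix (Fin n) (Fin n) ℝ) {t s r : ℕ}
    (h1 : 1 ≤ r) (h2 : s ≤ r) (h3 : r ≤ t + 1) :
    matProd W t s = matProd W t r * matProd W (r - 1) s := by
  obtain ⟨d, rfl⟩ : ∃ d, r = s + d := ⟨r - s, by omega⟩
  clear h2
  induction d generalizing s with
  | zero =>
    rw [matProd_empty W (show (s + 0 - 1) + 1 ≤ s by omega), mul_one]
    rfl
  | succ d ih =>
    have hst : s ≤ t := by omega
    rw [matProd_right W hst,
      ih (s := s + 1) (by omega) (by omega),
      show s + 1 + d = s + (d + 1) by omega, mul_assoc,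
      show s + (d + 1) - 1 = s + d by omega,
      ← matProd_right W (show s ≤ s + d by omega)]
end Aux
section Aux2
variable {n : ℕ}

lemma colStochastic_one (hn : 0 < n) : ColStochastic (1 : Matrix (Fin n) (Fin n) ℝ) := by
  constructor
  · intro i j
    by_cases h : i = j <;> simp [Matrix.one_apply, h]
  · intro j
    simp [Matrix.one_apply]

lemma ColStochastic.mul {A B : Matrix (Fin n) (Fin n) ℝ}
    (hA : ColStochastic A) (hB : ColStochastic B) : ColStochastic (A * B) := by
  constructor
  · intro i j
    rw [Matrix.mul_apply]
    exact Finset.sum_nonneg fun k _ => mul_nonneg (hA.1 i k) (hB.1 k j)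
  · intro j
    simp only [Matrix.mul_apply]
    rw [Finset.sum_comm]
    have : ∀ k, ∑ i, A i k * B k j = B k j := by
      intro k
      rw [← Finset.sum_mul, hA.2 k, one_mul]
    simp only [this]
    exact hB.2 j

lemma colStochastic_list_prod (l : List (Matrix (Fin n) (Fin n) ℝ)) (hn : 0 < n)
    (h : ∀ A ∈ l, ColStochastic A) : ColStochastic l.prod := by
  induction l with
  | nil => exact colStochastic_one hn
  | cons A l ih =>
    rw [List.prod_cons]
    exact (h A (by simp)).mul (ih fun B hB => h B (by simp [hB]))

lemma colStochastic_matProd (W : ℕ → Matrix (Fin n) (Fin n) ℝ) (hn : 0 < n)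
    (hCS : ∀ t, ColStochastic (W t)) (t s : ℕ) : ColStochastic (matProd W t s) := by
  apply colStochastic_list_prod _ hn
  intro A hA
  simp only [List.mem_map] at hA
  obtain ⟨k, _, rfl⟩ := hA
  exact hCS _

/-- A single entry bounds a product entry from below (nonnegative matrices). -/
lemma mul_entry_le {A B : Matrix (Fin n) (Fin n) ℝ}
    (hA : ∀ i j, 0 ≤ A i j) (hB : ∀ i j, 0 ≤ B i j) (i k j : Fin n) :
    A i k * B k j ≤ (A * B) i j := by
  rw [Matrix.mul_apply]
  exact Finset.single_le_sum (f := fun k => A i k * B k j)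
    (fun k _ => mul_nonneg (hA i k) (hB k j)) (Finset.mem_univ k)

/-- Nonnegativity of a product of nonneg matrices. -/
lemma list_prod_nonneg (l : List (Matrix (Fin n) (Fin n) ℝ))
    (h : ∀ A ∈ l, ∀ i j, 0 ≤ A i j) :
    ∀ i j, 0 ≤ l.prod i j := by
  induction l with
  | nil =>
    intro i j
    by_cases hij : i = j <;> simp [Matrix.one_apply, hij]
  | cons A l ih =>
    intro i j
    rw [List.prod_cons, Matrix.mul_apply]
    exact Finset.sum_nonneg fun k _ =>
      mul_nonneg (h A (by simp) i k) (ih (fun B hB => h B (by simp [hB])) k j)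

/-- Positive diagonal of a product of nonneg positive-diagonal matrices. -/
lemma list_prod_pos_diag (l : List (Matrix (Fin n) (Fin n) ℝ))
    (h : ∀ A ∈ l, (∀ i j, 0 ≤ A i j) ∧ ∀ i, 0 < A i i) :
    ∀ i, 0 < l.prod i i := by
  induction l with
  | nil => intro i; simp [Matrix.one_apply]
  | cons A l ih =>
    intro i
    rw [List.prod_cons]
    have hA := h A (by simp)
    have hl : ∀ B ∈ l, (∀ i j, 0 ≤ B i j) ∧ ∀ i, 0 < B i i :=
      fun B hB => h B (by simp [hB])
    have hlnn : ∀ i j, 0 ≤ l.prod i j :=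
      list_prod_nonneg l fun B hB => (hl B hB).1
    calc (0:ℝ) < A i i * l.prod i i := mul_pos (hA.2 i) (ih hl i)
    _ ≤ (A * l.prod) i i := mul_entry_le hA.1 hlnn i i i

end Aux2
section Aux3
variable {n : ℕ}

/-- entries of an out-degree-form matrix: nonzero entries are at least `1/n`. -/
lemma OutDegreeForm.entry_bound {W : Matrix (Fin n) (Fin n) ℝ} (hn : 0 < n)
    (h : OutDegreeForm W) :
    ∀ i j, W i j = 0 ∨ (1 : ℝ) / n ≤ W i j := by
  obtain ⟨N, hdiag, hW⟩ := h
  intro i j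
  rw [hW i j]
  by_cases hij : i ∈ N j
  · right
    rw [if_pos hij]
    have h1 : 0 < (N j).card := Finset.card_pos.2 ⟨j, hdiag j⟩
    have h2 : (N j).card ≤ n := by
      simpa using Finset.card_le_card (Finset.subset_univ (N j))
    apply div_le_div_of_nonneg_left (by norm_num) (by positivity)
    exact_mod_cast h2
  · left
    rw [if_neg hij]

lemma OutDegreeForm.diag_pos {W : Matrix (Fin n) (Fin n) ℝ} (hn : 0 < n)
    (h : OutDegreeForm W) : ∀ i, 0 < W i i := by
  obtain ⟨N, hdiag, hW⟩ := h
  intro i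
  rw [hW i i, if_pos (hdiag i)]
  have h1 : 0 < (N i).card := Finset.card_pos.2 ⟨i, hdiag i⟩
  positivity

/-- Positive diagonal of `matProd`. -/
lemma matProd_diag_pos (W : ℕ → Matrix (Fin n) (Fin n) ℝ) (hn : 0 < n)
    (hCS : ∀ t, ColStochastic (W t)) (hOD : ∀ t, OutDegreeForm (W t)) (t s : ℕ) :
    ∀ i, 0 < matProd W t s i i := by
  apply list_prod_pos_diag
  intro A hA
  simp only [List.mem_map] at hA
  obtain ⟨k, _, rfl⟩ := hA
  exact ⟨(hCS _).1, (hOD _).diag_pos hn⟩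

lemma matProd_nonneg (W : ℕ → Matrix (Fin n) (Fin n) ℝ)
    (hCS : ∀ t, ColStochastic (W t)) (t s : ℕ) :
    ∀ i j, 0 ≤ matProd W t s i j := by
  apply list_prod_nonneg
  intro A hA
  simp only [List.mem_map] at hA
  obtain ⟨k, _, rfl⟩ := hA
  exact (hCS _).1

/-- Every positive entry of a product of `m` matrices, each of whose positive
entries are at least `c`, is at least `c ^ m`. -/
lemma list_prod_entry_bound (c : ℝ) (hc : 0 ≤ c) (l : List (Matrix (Fin n) (Fin n) ℝ))
    (h : ∀ A ∈ l, (∀ i j, 0 ≤ A i j) ∧ ∀ i j, A i j = 0 ∨ c ≤ A i j) :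
    ∀ i j, l.prod i j = 0 ∨ c ^ l.length ≤ l.prod i j := by
  induction l with
  | nil =>
    intro i j
    by_cases hij : i = j <;> simp [Matrix.one_apply, hij]
  | cons A l ih =>
    intro i j
    have hA := h A (by simp)
    have hl : ∀ B ∈ l, (∀ i j, 0 ≤ B i j) ∧ ∀ i j, B i j = 0 ∨ c ≤ B i j :=
      fun B hB => h B (by simp [hB])
    have hlnn := list_prod_nonneg l fun B hB => (hl B hB).1
    rw [List.prod_cons]
    by_cases hz : (A * l.prod) i j = 0
    · exact Or.inl hz
    · right
      have hnn : ∀ k, 0 ≤ A i k * l.prod k j :=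
        fun k => mul_nonneg (hA.1 i k) (hlnn k j)
      have hpos : 0 < (A * l.prod) i j := by
        rcases lt_or_eq_of_le (Finset.sum_nonneg (fun k _ => hnn k) :
          0 ≤ ∑ k, A i k * l.prod k j) with h' | h'
        · rwa [Matrix.mul_apply]
        · exact absurd (by rw [Matrix.mul_apply, ← h']) hz
      rw [Matrix.mul_apply] at hpos
      obtain ⟨k, _, hk⟩ := Finset.exists_lt_of_sum_lt (by simpa using hpos :
        ∑ k, (0:ℝ) < ∑ k, A i k * l.prod k j)
      have hkpos : 0 < A i k * l.prod k j := hk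
      have hA_pos : 0 < A i k := by
        rcases (hA.1 i k).lt_or_eq with h' | h'
        · exact h'
        · exfalso; rw [← h', zero_mul] at hkpos; exact lt_irrefl _ hkpos
      have hl_pos : 0 < l.prod k j := by
        rcases (hlnn k j).lt_or_eq with h' | h'
        · exact h'
        · exfalso; rw [← h', mul_zero] at hkpos; exact lt_irrefl _ hkpos
      have h1 : c ≤ A i k := (hA.2 i k).resolve_left (by positivity)
      have h2 : c ^ l.length ≤ l.prod k j := (ih hl k j).resolve_left (by positivity)
      calc c ^ (l.length + 1) = c * c ^ l.length := by ring
      _ ≤ A i k * l.prod k j := mul_le_mul h1 h2 (by positivity) (le_of_lt hA_pos)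
      _ ≤ (A * l.prod) i j := mul_entry_le hA.1 hlnn i k j
      -- length of cons
    
lemma matProd_entry_bound (W : ℕ → Matrix (Fin n) (Fin n) ℝ) (hn : 0 < n)
    (hCS : ∀ t, ColStochastic (W t)) (hOD : ∀ t, OutDegreeForm (W t)) (t s : ℕ) :
    ∀ i j, matProd W t s i j = 0 ∨ ((1:ℝ)/n) ^ (t + 1 - s) ≤ matProd W t s i j := by
  have := list_prod_entry_bound ((1:ℝ)/n) (by positivity)
    (((List.range (t + 1 - s)).map fun k => W (t - k)))
    (by
      intro A hA
      simp only [List.mem_map] at hA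
      obtain ⟨k, _, rfl⟩ := hA
      exact ⟨(hCS _).1, (hOD _).entry_bound hn⟩)
  simpa [matProd] using this

end Aux3
section Aux4
variable {n : ℕ}

lemma flowSum_nonneg {A : Matrix (Fin n) (Fin n) ℝ} (hA : ∀ i j, 0 ≤ A i j)
    (S : Finset (Fin n)) : 0 ≤ flowSum A S :=
  Finset.sum_nonneg fun i _ => Finset.sum_nonneg fun j _ => hA i j

/-- The defining set for `kSeq` is nonempty. -/
lemma kSeq_set_nonempty (W : ℕ → Matrix (Fin n) (Fin n) ℝ)
    (hflow : DirectedInfiniteFlow W) (s : ℕ) :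
    {t' : ℕ | s < t' ∧ ∀ S : Finset (Fin n), NontrivialSubset S →
      0 < ∑ t ∈ Finset.Ico s t', flowSum (W t) S}.Nonempty := by
  classical
  have h1 : ∀ᶠ T in Filter.atTop, ∀ S : {S : Finset (Fin n) // NontrivialSubset S},
      (∑ t ∈ Finset.range s, flowSum (W t) S.1) < ∑ t ∈ Finset.range T, flowSum (W t) S.1 :=
    Filter.eventually_all.2 fun S => (hflow S.1 S.2).eventually_gt_atTop _
  have h2 : ∀ᶠ T : ℕ in Filter.atTop, s < T := Filter.eventually_gt_atTop s
  obtain ⟨T, hT1, hT2⟩ := (h1.and h2).exists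
  refine ⟨T, hT2, fun S hS => ?_⟩
  have hsum := hT1 ⟨S, hS⟩
  have : ∑ t ∈ Finset.range s, flowSum (W t) S + ∑ t ∈ Finset.Ico s T, flowSum (W t) S
      = ∑ t ∈ Finset.range T, flowSum (W t) S := by
    simp only [Finset.range_eq_Ico]
    exact Finset.sum_Ico_consecutive (fun t => flowSum (W t) S) (Nat.zero_le s) (le_of_lt hT2)
  linarith

lemma kSeq_succ_mem (W : ℕ → Matrix (Fin n) (Fin n) ℝ)
    (hflow : DirectedInfiniteFlow W) (q : ℕ) :
    kSeq W q < kSeq W (q + 1) ∧ ∀ S : Finset (Fin n), NontrivialSubset S →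
      0 < ∑ t ∈ Finset.Ico (kSeq W q) (kSeq W (q + 1)), flowSum (W t) S := by
  have := Nat.sInf_mem (kSeq_set_nonempty W hflow (kSeq W q))
  exact this

lemma kSeq_strictMono (W : ℕ → Matrix (Fin n) (Fin n) ℝ)
    (hflow : DirectedInfiniteFlow W) : StrictMono (kSeq W) :=
  strictMono_nat_of_lt_succ fun q => (kSeq_succ_mem W hflow q).1

lemma kSeq_ge (W : ℕ → Matrix (Fin n) (Fin n) ℝ)
    (hflow : DirectedInfiniteFlow W) (q : ℕ) : q ≤ kSeq W q :=
  (kSeq_strictMono W hflow).le_apply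

/-- Cut property of a matrix. -/
def CutProp (M : Matrix (Fin n) (Fin n) ℝ) : Prop :=
  ∀ S : Finset (Fin n), NontrivialSubset S → ∃ i ∈ S, ∃ j ∈ Sᶜ, 0 < M i j

/-- Products over the intervals `[kSeq q, kSeq (q+1))` satisfy the cut property. -/
lemma interval_cutProp (W : ℕ → Matrix (Fin n) (Fin n) ℝ) (hn : 0 < n)
    (hCS : ∀ t, ColStochastic (W t)) (hOD : ∀ t, OutDegreeForm (W t))
    {s r : ℕ} (hsr : s < r)
    (hcut : ∀ S : Finset (Fin n), NontrivialSubset S →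
      0 < ∑ t ∈ Finset.Ico s r, flowSum (W t) S) :
    CutProp (matProd W (r - 1) s) := by
  intro S hS
  -- find a time with positive flow
  obtain ⟨t, ht, htpos⟩ : ∃ t ∈ Finset.Ico s r, 0 < flowSum (W t) S := by
    by_contra hcon
    push_neg at hcon
    have : ∑ t ∈ Finset.Ico s r, flowSum (W t) S ≤ 0 :=
      Finset.sum_nonpos fun t ht => hcon t ht
    exact absurd (hcut S hS) (not_lt.2 this)
  simp only [Finset.mem_Ico] at ht
  -- find a positive entry across the cut at time t
  obtain ⟨a, ha, hapos⟩ : ∃ a ∈ S, 0 < ∑ j ∈ Sᶜ, W t a j := by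
    by_contra hcon
    push_neg at hcon
    exact absurd htpos (not_lt.2 (Finset.sum_nonpos fun a ha => hcon a ha))
  obtain ⟨b, hb, hbpos⟩ : ∃ b ∈ Sᶜ, 0 < W t a b := by
    by_contra hcon
    push_neg at hcon
    exact absurd hapos (not_lt.2 (Finset.sum_nonpos fun b hb => hcon b hb))
  refine ⟨a, ha, b, hb, ?_⟩
  -- matProd W (r-1) s = matProd W (r-1) (t+1) * matProd W t s
  have hsplit := matProd_split W (r := t + 1) (t := r - 1) (s := s)
    (by omega) (by omega) (by omega)
  rw [hsplit]
  have h1 : 0 < matProd W (r - 1) (t + 1) a a := matProd_diag_pos W hn hCS hOD _ _ a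
  have h2 : 0 < matProd W t s a b := by
    rcases eq_or_lt_of_le (show s ≤ t by omega) with h' | h'
    · subst h'
      rw [matProd_self]
      exact hbpos
    · obtain ⟨t', rfl⟩ : ∃ t', t = t' + 1 := ⟨t - 1, by omega⟩
      rw [matProd_left W (by omega)]
      calc (0:ℝ) < W (t' + 1) a b * matProd W t' s b b :=
        mul_pos hbpos (matProd_diag_pos W hn hCS hOD _ _ b)
      _ ≤ _ := mul_entry_le (hCS _).1 (matProd_nonneg W hCS _ _) a b b
  calc (0:ℝ) < matProd W (r - 1) (t + 1) a a * matProd W t s a b := mul_pos h1 h2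
  _ ≤ _ := mul_entry_le (matProd_nonneg W hCS _ _) (matProd_nonneg W hCS _ _) a a b

end Aux4
section Aux5
variable {n : ℕ}

open scoped Classical in
/-- Support of column `j`. -/
noncomputable def colSupp (M : Matrix (Fin n) (Fin n) ℝ) (j : Fin n) : Finset (Fin n) :=
  Finset.univ.filter fun i => 0 < M i j

lemma mem_colSupp {M : Matrix (Fin n) (Fin n) ℝ} {i j : Fin n} :
    i ∈ colSupp M j ↔ 0 < M i j := by
  simp [colSupp]

lemma colSupp_subset_mul {B M : Matrix (Fin n) (Fin n) ℝ}
    (hB : ∀ i j, 0 ≤ B i j) (hBd : ∀ i, 0 < B i i) (hM : ∀ i j, 0 ≤ M i j) (j : Fin n) :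
    colSupp M j ⊆ colSupp (B * M) j := by
  intro i hi
  rw [mem_colSupp] at hi ⊢
  calc (0:ℝ) < B i i * M i j := mul_pos (hBd i) hi
  _ ≤ (B * M) i j := mul_entry_le hB hM i i j

lemma colSupp_grow {B M : Matrix (Fin n) (Fin n) ℝ}
    (hB : ∀ i j, 0 ≤ B i j) (hBd : ∀ i, 0 < B i i) (hBc : CutProp B)
    (hM : ∀ i j, 0 ≤ M i j) (j : Fin n)
    (h1 : (colSupp M j).Nonempty) (h2 : colSupp M j ≠ Finset.univ) :
    colSupp M j ⊂ colSupp (B * M) j := by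
  have hsub := colSupp_subset_mul hB hBd hM j
  rw [Finset.ssubset_iff_of_subset hsub]
  have hcompl : NontrivialSubset (colSupp M j)ᶜ := by
    constructor
    · rw [Finset.nonempty_iff_ne_empty]
      intro hcon
      rw [Finset.compl_eq_empty_iff] at hcon
      exact h2 hcon
    · intro hcon
      rw [Finset.compl_eq_univ_iff] at hcon
      exact absurd h1 (by simp [hcon])
  obtain ⟨i, hi, k, hk, hik⟩ := hBc _ hcompl
  rw [compl_compl] at hk
  refine ⟨i, ?_, ?_⟩
  · rw [mem_colSupp]
    calc (0:ℝ) < B i k * M k j := mul_pos hik (mem_colSupp.1 hk)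
    _ ≤ (B * M) i j := mul_entry_le hB hM i k j
  · rwa [← Finset.mem_compl]

/-- The product over `n` consecutive `kSeq`-intervals has all entries positive. -/
lemma nblock_pos (W : ℕ → Matrix (Fin n) (Fin n) ℝ) (hn : 0 < n)
    (hCS : ∀ t, ColStochastic (W t)) (hOD : ∀ t, OutDegreeForm (W t))
    (hflow : DirectedInfiniteFlow W) (a : ℕ) :
    ∀ i j, 0 < matProd W (kSeq W (a + n) - 1) (kSeq W a) i j := by
  have claim : ∀ d, 1 ≤ d → ∀ j : Fin n,
      min d n ≤ (colSupp (matProd W (kSeq W (a + d) - 1) (kSeq W a)) j).card := by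
    intro d
    induction d with
    | zero => omega
    | succ d ih =>
      intro _ j
      by_cases hd : d = 0
      · subst hd
        have hmem : j ∈ colSupp (matProd W (kSeq W (a + 1) - 1) (kSeq W a)) j :=
          mem_colSupp.2 (matProd_diag_pos W hn hCS hOD _ _ j)
        have := Finset.card_pos.2 ⟨j, hmem⟩
        simp only [Nat.zero_add] at *
        omega
      · have hd1 : 1 ≤ d := by omega
        have ihd := ih hd1 j
        set s0 := kSeq W a with hs0
        set r0 := kSeq W (a + d) with hr0
        set r1 := kSeq W (a + d + 1) with hr1
        have hmono := kSeq_strictMono W hflow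
        have h01 : r0 < r1 := hmono (by omega)
        have hs0r0 : s0 ≤ r0 := hmono.monotone (by omega)
        have hr0ge : 1 ≤ r0 := le_trans (by omega) (kSeq_ge W hflow (a + d))
        have hsplit : matProd W (r1 - 1) s0
            = matProd W (r1 - 1) r0 * matProd W (r0 - 1) s0 :=
          matProd_split W hr0ge hs0r0 (by omega)
        have hBnn := matProd_nonneg W hCS (r1 - 1) r0
        have hBd := matProd_diag_pos W hn hCS hOD (r1 - 1) r0
        have hMnn := matProd_nonneg W hCS (r0 - 1) s0
        have hBc : CutProp (matProd W (r1 - 1) r0) :=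
          interval_cutProp W hn hCS hOD h01 (kSeq_succ_mem W hflow (a + d)).2
        rw [show a + (d + 1) = a + d + 1 by omega, hsplit]
        by_cases huniv : colSupp (matProd W (r0 - 1) s0) j = Finset.univ
        · have : Finset.univ ⊆ colSupp
              (matProd W (r1 - 1) r0 * matProd W (r0 - 1) s0) j := by
            rw [← huniv]
            exact colSupp_subset_mul hBnn hBd hMnn j
          have := Finset.card_le_card this
          simp only [Finset.card_univ, Fintype.card_fin] at this
          omega
        · have hne : (colSupp (matProd W (r0 - 1) s0) j).Nonempty :=
            ⟨j, mem_colSupp.2 (matProd_diag_pos W hn hCS hOD _ _ j)⟩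
          have hss := colSupp_grow hBnn hBd hBc hMnn j hne huniv
          have hlt := Finset.card_lt_card hss
          have hltn : (colSupp (matProd W (r0 - 1) s0) j).card < n := by
            have := Finset.card_lt_card
              (Finset.ssubset_univ_iff.2 huniv)
            simpa using this
          omega
  intro i j
  have := claim n (by omega) j
  have hcard : (colSupp (matProd W (kSeq W (a + n) - 1) (kSeq W a)) j).card = n := by
    have hle := Finset.card_le_univ (colSupp (matProd W (kSeq W (a + n) - 1) (kSeq W a)) j)
    simp only [Finset.card_univ, Fintype.card_fin] at hle
    omega
  have huniv : colSupp (matProd W (kSeq W (a + n) - 1) (kSeq W a)) j = Finset.univ := by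
    apply Finset.eq_univ_of_card
    simpa using hcard
  have : i ∈ colSupp (matProd W (kSeq W (a + n) - 1) (kSeq W a)) j := by
    rw [huniv]; exact Finset.mem_univ i
  exact mem_colSupp.1 this

end Aux5
section Aux6
variable {n : ℕ}

lemma ColStochastic.entry_le_one {A : Matrix (Fin n) (Fin n) ℝ}
    (h : ColStochastic A) (i j : Fin n) : A i j ≤ 1 := by
  rw [← h.2 j]
  exact Finset.single_le_sum (fun k _ => h.1 k j) (Finset.mem_univ i)

lemma max_zero_sub_eq (u v : ℝ) : max 0 (u - v) = u - min u v := by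
  rcases le_total u v with h | h
  · rw [max_eq_left (by linarith), min_eq_left h]
    ring
  · rw [max_eq_right (by linarith), min_eq_right h]

/-- Spread contraction: multiplying on the right by a column-stochastic matrix
with entries at least `δ` contracts row spreads by `1 - δ`. -/
lemma sprd_mul (hn : 0 < n) {M B : Matrix (Fin n) (Fin n) ℝ}
    (hB : ColStochastic B) {δ : ℝ} (hδ0 : 0 ≤ δ) (hδ : ∀ k j, δ ≤ B k j)
    {i : Fin n} {c : ℝ} (hc : 0 ≤ c) (h : ∀ j j', M i j - M i j' ≤ c) :
    ∀ j j', (M * B) i j - (M * B) i j' ≤ (1 - δ) * c := by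
  have : Nonempty (Fin n) := Fin.pos_iff_nonempty.1 hn
  intro j j'
  obtain ⟨k₀, _, hk₀⟩ := Finset.exists_min_image Finset.univ (M i) Finset.univ_nonempty
  set m := M i k₀ with hm
  have e1 : (M * B) i j - (M * B) i j' = ∑ k, (M i k - m) * (B k j - B k j') := by
    rw [Matrix.mul_apply, Matrix.mul_apply]
    have expand : ∑ k, (M i k - m) * (B k j - B k j')
        = ((∑ k, M i k * B k j) - (∑ k, M i k * B k j'))
          - m * ((∑ k, B k j) - (∑ k, B k j')) := by
      simp only [sub_mul, mul_sub, Finset.sum_sub_distrib, Finset.mul_sum]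
      ring
    rw [expand, hB.2 j, hB.2 j', sub_self, mul_zero, sub_zero]
  rw [e1]
  have step2 : ∑ k, (M i k - m) * (B k j - B k j')
      ≤ ∑ k, c * max 0 (B k j - B k j') := by
    apply Finset.sum_le_sum
    intro k _
    rcases le_total (B k j') (B k j) with h' | h'
    · have hx : (0:ℝ) ≤ B k j - B k j' := by linarith
      rw [max_eq_right hx]
      exact mul_le_mul_of_nonneg_right (h k k₀) hx
    · have hx : B k j - B k j' ≤ (0:ℝ) := by linarith
      rw [max_eq_left hx, mul_zero]
      exact mul_nonpos_of_nonneg_of_nonpos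
        (sub_nonneg.2 (hk₀ k (Finset.mem_univ k))) hx
  have step3 : ∑ k, max 0 (B k j - B k j') ≤ 1 - δ := by
    have e2 : ∀ k : Fin n, max 0 (B k j - B k j') = B k j - min (B k j) (B k j') :=
      fun k => max_zero_sub_eq _ _
    simp only [e2]
    rw [Finset.sum_sub_distrib, hB.2 j]
    have hmin : δ ≤ ∑ k, min (B k j) (B k j') := by
      calc δ ≤ min (B k₀ j) (B k₀ j') := le_min (hδ k₀ j) (hδ k₀ j')
      _ ≤ ∑ k, min (B k j) (B k j') :=
        Finset.single_le_sum
          (fun k _ => le_trans hδ0 (le_min (hδ k j) (hδ k j')))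
          (Finset.mem_univ k₀)
    linarith
  calc ∑ k, (M i k - m) * (B k j - B k j') ≤ ∑ k, c * max 0 (B k j - B k j') := step2
  _ = c * ∑ k, max 0 (B k j - B k j') := by rw [Finset.mul_sum]
  _ ≤ c * (1 - δ) := mul_le_mul_of_nonneg_left step3 hc
  _ = (1 - δ) * c := mul_comm _ _

end Aux6
section Aux7
variable {n : ℕ}

lemma pushIter_eq (W : ℕ → Matrix (Fin n) (Fin n) ℝ) (u0 : Fin n → ℝ) (t : ℕ) :
    pushIter W u0 (t + 1) = (matProd W t 0).mulVec u0 := by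
  induction t with
  | zero =>
    show (W 0).mulVec (pushIter W u0 0) = _
    rw [matProd_self]
    rfl
  | succ t ih =>
    show (W (t + 1)).mulVec (pushIter W u0 (t + 1)) = _
    rw [ih, matProd_left W (Nat.zero_le _), ← Matrix.mulVec_mulVec]

end Aux7

theorem pushsum_error_bound' {n : ℕ} (hn : 2 ≤ n)
    (W : ℕ → Matrix (Fin n) (Fin n) ℝ)
    (hCS : ∀ t, ColStochastic (W t))
    (hOD : ∀ t, OutDegreeForm (W t))
    (hflow : DirectedInfiniteFlow W)
    (x0 : Fin n → ℝ) :
    (∀ q : ℕ, 1 ≤ q →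
      (0:ℝ) < 1 - 1 / (n : ℝ) ^ (ellSeq W q) ∧ 1 - 1 / (n : ℝ) ^ (ellSeq W q) < 1) ∧
    ∀ (t : ℕ) (i : Fin n),
      |pushIter W x0 (t + 1) i / pushIter W (fun _ => 1) (t + 1) i
          - (∑ j, x0 j) / n|
        ≤ 2 * (∑ j, |x0 j|) / pushIter W (fun _ => 1) (t + 1) i * Lam W t 0 := by
  have hn0 : 0 < n := by omega
  have hnR : (1:ℝ) < n := by exact_mod_cast hn
  have hnR0 : (0:ℝ) < n := by positivity
  have hmono := kSeq_strictMono W hflow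
  have hfac : ∀ q : ℕ, 1 ≤ q →
      (0:ℝ) < 1 - 1 / (n : ℝ) ^ (ellSeq W q) ∧ 1 - 1 / (n : ℝ) ^ (ellSeq W q) < 1 := by
    intro q hq
    have hlt : (q - 1) * n < q * n := by
      calc (q - 1) * n < (q - 1) * n + n := by omega
      _ = ((q - 1) + 1) * n := (Nat.succ_mul _ _).symm
      _ = q * n := by rw [show q - 1 + 1 = q by omega]
    have hℓ : 1 ≤ ellSeq W q := by
      have := hmono hlt
      unfold ellSeq
      omega
    have hpow : (1:ℝ) < (n:ℝ) ^ (ellSeq W q) := one_lt_pow₀ hnR (by omega)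
    constructor
    · have : 1 / (n:ℝ) ^ (ellSeq W q) < 1 := (div_lt_one (by positivity)).2 hpow
      linarith
    · have : 0 < 1 / (n:ℝ) ^ (ellSeq W q) := by positivity
      linarith
  refine ⟨hfac, ?_⟩
  intro t i
  classical
  set Q := QSet W t 0 with hQdef
  set m : ℕ := if h : Q.Nonempty then Q.max' h else 0 with hm
  have hmemQ : ∀ q, q ∈ Q ↔ 1 ≤ q ∧ kSeq W (q * n) ≤ t := by
    intro q
    constructor
    · intro hq
      simp only [hQdef, QSet, Finset.mem_filter, Finset.mem_Icc] at hq
      exact ⟨hq.1.1, hq.2.2⟩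
    · intro ⟨h1, h2⟩
      have hqt : q ≤ t := by
        have h3 : q ≤ q * n := Nat.le_mul_of_pos_right q hn0
        have h4 := kSeq_ge W hflow (q * n)
        omega
      simp only [hQdef, QSet, Finset.mem_filter, Finset.mem_Icc]
      exact ⟨⟨h1, hqt⟩, Nat.zero_le _, h2⟩
  have hQIcc : Q = Finset.Icc 1 m := by
    ext q
    rw [hmemQ, Finset.mem_Icc]
    constructor
    · intro ⟨h1, h2⟩
      refine ⟨h1, ?_⟩
      have hne : Q.Nonempty := ⟨q, (hmemQ q).2 ⟨h1, h2⟩⟩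
      rw [hm, dif_pos hne]
      exact Q.le_max' q ((hmemQ q).2 ⟨h1, h2⟩)
    · intro ⟨h1, h2⟩
      refine ⟨h1, ?_⟩
      have hne : Q.Nonempty := by
        by_contra hcon
        rw [hm, dif_neg hcon] at h2
        omega
      have hmQ : m ∈ Q := by
        rw [hm, dif_pos hne]
        exact Q.max'_mem hne
      have hmt : kSeq W (m * n) ≤ t := ((hmemQ m).1 hmQ).2
      have : kSeq W (q * n) ≤ kSeq W (m * n) :=
        hmono.monotone (Nat.mul_le_mul_right n h2)
      omega
  -- spreads contract across the blocks
  have main : ∀ d, d ≤ m → ∀ j j',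
      matProd W t (kSeq W ((m - d) * n)) i j - matProd W t (kSeq W ((m - d) * n)) i j'
        ≤ ∏ q ∈ Finset.Icc (m - d + 1) m, (1 - 1 / (n : ℝ) ^ (ellSeq W q)) := by
    intro d
    induction d with
    | zero =>
      intro _ j j'
      rw [show m - 0 + 1 = m + 1 by omega, Finset.Icc_eq_empty (by omega),
        Finset.prod_empty]
      have hcs := colStochastic_matProd W hn0 hCS t (kSeq W ((m - 0) * n))
      have h1 := hcs.entry_le_one i j
      have h2 := hcs.1 i j'
      linarith
    | succ d ih =>
      intro hdm j j'
      have hd : d ≤ m := by omega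
      set r := m - d with hr
      have hr1 : 1 ≤ r := by omega
      have hmQ : m ∈ Q := by
        rcases Finset.eq_empty_or_nonempty Q with hq | hne
        · exfalso
          have hm0 : m = 0 := by
            rw [hm, dif_neg (by simp [hq])]
          omega
        · rw [hm, dif_pos hne]
          exact Q.max'_mem hne
      have hrQ : kSeq W (r * n) ≤ t := by
        have hmt : kSeq W (m * n) ≤ t := ((hmemQ m).1 hmQ).2
        have : kSeq W (r * n) ≤ kSeq W (m * n) :=
          hmono.monotone (Nat.mul_le_mul_right n (by omega))
        omega
      have hkr1 : 1 ≤ kSeq W (r * n) := by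
        have h1 : 1 ≤ r * n := Nat.mul_pos hr1 hn0
        have := kSeq_ge W hflow (r * n)
        omega
      have hsle : kSeq W ((r - 1) * n) ≤ kSeq W (r * n) :=
        hmono.monotone (Nat.mul_le_mul_right n (by omega))
      have hsplit := matProd_split W (t := t) (s := kSeq W ((r - 1) * n))
        (r := kSeq W (r * n)) hkr1 hsle (by omega)
      rw [show m - (d + 1) = r - 1 by omega, hsplit]
      set B := matProd W (kSeq W (r * n) - 1) (kSeq W ((r - 1) * n)) with hB
      have hpos : ∀ a b, 0 < B a b := by
        have hpb := nblock_pos W hn0 hCS hOD hflow ((r - 1) * n)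
        have e : (r - 1) * n + n = r * n := by
          calc (r - 1) * n + n = ((r - 1) + 1) * n := (Nat.succ_mul _ _).symm
          _ = r * n := by rw [show r - 1 + 1 = r by omega]
        rw [hB, ← e]
        exact fun a b => hpb a b
      have hℓe : (kSeq W (r * n) - 1) + 1 - kSeq W ((r - 1) * n) = ellSeq W r := by
        unfold ellSeq
        omega
      have hδle : ∀ a b, 1 / (n:ℝ) ^ (ellSeq W r) ≤ B a b := by
        intro a b
        have hbd := matProd_entry_bound W hn0 hCS hOD
          (kSeq W (r * n) - 1) (kSeq W ((r - 1) * n)) a b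
        rcases hbd with h0 | hge
        · exact absurd h0 (ne_of_gt (hpos a b))
        · rw [hℓe] at hge
          rw [show (1:ℝ) / (n:ℝ) ^ (ellSeq W r) = ((1:ℝ)/n) ^ (ellSeq W r) by
            rw [one_div_pow]]
          exact hge
      have hcolB : ColStochastic B := colStochastic_matProd W hn0 hCS _ _
      have hprev : ∀ j j', matProd W t (kSeq W (r * n)) i j
          - matProd W t (kSeq W (r * n)) i j'
          ≤ ∏ q ∈ Finset.Icc (r + 1) m, (1 - 1 / (n : ℝ) ^ (ellSeq W q)) := by
        intro j j'
        exact ih hd j j'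
      have hprodnn : (0:ℝ) ≤ ∏ q ∈ Finset.Icc (r + 1) m, (1 - 1 / (n : ℝ) ^ (ellSeq W q)) :=
        Finset.prod_nonneg fun q hq =>
          (hfac q (by simp only [Finset.mem_Icc] at hq; omega)).1.le
      have hcontr := sprd_mul hn0 hcolB
        (δ := 1 / (n:ℝ) ^ (ellSeq W r)) (by positivity) hδle hprodnn hprev j j'
      have hins : Finset.Icc r m = insert r (Finset.Icc (r + 1) m) := by
        ext a
        simp only [Finset.mem_Icc, Finset.mem_insert]
        omega
      rw [show r - 1 + 1 = r by omega, hins,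
        Finset.prod_insert (by simp [Finset.mem_Icc])]
      exact hcontr
  -- instantiate at d = m
  have hsprd : ∀ j j', matProd W t 0 i j - matProd W t 0 i j' ≤ Lam W t 0 := by
    intro j j'
    have h := main m le_rfl j j'
    rw [show m - m = 0 by omega] at h
    simp only [Nat.zero_mul, Nat.zero_add] at h
    have hk0 : kSeq W 0 = 0 := rfl
    rw [hk0] at h
    unfold Lam
    rw [← hQdef, hQIcc]
    exact h
  -- final assembly
  set P := matProd W t 0 with hP
  have hPcs : ColStochastic P := colStochastic_matProd W hn0 hCS t 0
  have hy' : pushIter W (fun _ => 1) (t + 1) i = ∑ k, P i k := by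
    rw [pushIter_eq]
    simp [Matrix.mulVec, dotProduct, ← hP]
  set y := ∑ k, P i k with hyv
  have hypos : 0 < y :=
    lt_of_lt_of_le (matProd_diag_pos W hn0 hCS hOD t 0 i)
      (Finset.single_le_sum (fun k _ => hPcs.1 i k) (Finset.mem_univ i))
  have hΛ : 0 ≤ Lam W t 0 :=
    Finset.prod_nonneg fun q hq => (hfac q ((hmemQ q).1 hq).1).1.le
  have habs : ∀ j k, |P i j - P i k| ≤ Lam W t 0 := fun j k =>
    abs_le.2 ⟨by linarith [hsprd k j], hsprd j k⟩
  have hdiff : ∀ j, |(n:ℝ) * P i j - y| ≤ (n:ℝ) * Lam W t 0 := by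
    intro j
    have e : (n:ℝ) * P i j - y = ∑ k, (P i j - P i k) := by
      rw [Finset.sum_sub_distrib, Finset.sum_const, Finset.card_univ, hyv]
      simp [nsmul_eq_mul]
    rw [e]
    calc |∑ k, (P i j - P i k)| ≤ ∑ k, |P i j - P i k| :=
          Finset.abs_sum_le_sum_abs _ _
    _ ≤ ∑ _k : Fin n, Lam W t 0 := Finset.sum_le_sum fun k _ => habs j k
    _ = (n:ℝ) * Lam W t 0 := by
        simp [Finset.sum_const, Finset.card_univ, nsmul_eq_mul]
  have hkey : |(n:ℝ) * P.mulVec x0 i - (∑ j, x0 j) * y|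
      ≤ (∑ j, |x0 j|) * ((n:ℝ) * Lam W t 0) := by
    have e : (n:ℝ) * P.mulVec x0 i - (∑ j, x0 j) * y
        = ∑ j, x0 j * ((n:ℝ) * P i j - y) := by
      simp only [Matrix.mulVec, dotProduct]
      rw [Finset.mul_sum, Finset.sum_mul, ← Finset.sum_sub_distrib]
      exact Finset.sum_congr rfl fun j _ => by ring
    rw [e]
    calc |∑ j, x0 j * ((n:ℝ) * P i j - y)|
        ≤ ∑ j, |x0 j * ((n:ℝ) * P i j - y)| := Finset.abs_sum_le_sum_abs _ _
    _ = ∑ j, |x0 j| * |(n:ℝ) * P i j - y| := by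
        apply Finset.sum_congr rfl
        intro j _
        rw [abs_mul]
    _ ≤ ∑ j, |x0 j| * ((n:ℝ) * Lam W t 0) :=
        Finset.sum_le_sum fun j _ =>
          mul_le_mul_of_nonneg_left (hdiff j) (abs_nonneg _)
    _ = (∑ j, |x0 j|) * ((n:ℝ) * Lam W t 0) := by rw [← Finset.sum_mul]
  rw [pushIter_eq, hy']
  have hy0 : y ≠ 0 := ne_of_gt hypos
  have hnne : (n:ℝ) ≠ 0 := ne_of_gt hnR0
  have e2 : P.mulVec x0 i / y - (∑ j, x0 j) / (n:ℝ)
      = ((n:ℝ) * P.mulVec x0 i - (∑ j, x0 j) * y) / ((n:ℝ) * y) := by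
    field_simp
  rw [e2, abs_div, abs_of_pos (mul_pos hnR0 hypos)]
  have hxnn : (0:ℝ) ≤ ∑ j, |x0 j| := Finset.sum_nonneg fun j _ => abs_nonneg _
  calc |(n:ℝ) * P.mulVec x0 i - (∑ j, x0 j) * y| / ((n:ℝ) * y)
      ≤ ((∑ j, |x0 j|) * ((n:ℝ) * Lam W t 0)) / ((n:ℝ) * y) :=
        (div_le_div_iff_of_pos_right (mul_pos hnR0 hypos)).2 hkey
  _ = (∑ j, |x0 j|) * Lam W t 0 / y := by
        field_simp
  _ ≤ 2 * (∑ j, |x0 j|) / y * Lam W t 0 := by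
        have h1 : (0:ℝ) ≤ (∑ j, |x0 j|) * Lam W t 0 / y :=
          div_nonneg (mul_nonneg hxnn hΛ) hypos.le
        have h2 : 2 * (∑ j, |x0 j|) / y * Lam W t 0
            = 2 * ((∑ j, |x0 j|) * Lam W t 0 / y) := by ring
        linarith

/-- Push-sum error bound: for column-stochastic out-degree-form matrices
with the directed infinite flow property,
`|z_i(t+1) - x̄| ≤ (2‖x(0)‖₁ / y_i(t+1)) Λ_{t,0}`, with each factor of `Λ` in `(0,1)`. -/
theorem pushsum_error_bound {n : ℕ} (hn : 2 ≤ n)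
    (W : ℕ → Matrix (Fin n) (Fin n) ℝ)
    (hCS : ∀ t, ColStochastic (W t))
    (hOD : ∀ t, OutDegreeForm (W t))
    (hflow : DirectedInfiniteFlow W)
    (x0 : Fin n → ℝ) :
    (∀ q : ℕ, 1 ≤ q →
      (0:ℝ) < 1 - 1 / (n : ℝ) ^ (ellSeq W q) ∧ 1 - 1 / (n : ℝ) ^ (ellSeq W q) < 1) ∧
    ∀ (t : ℕ) (i : Fin n),
      |pushIter W x0 (t + 1) i / pushIter W (fun _ => 1) (t + 1) i
          - (∑ j, x0 j) / n|
        ≤ 2 * (∑ j, |x0 j|) / pushIter W (fun _ => 1) (t + 1) i * Lam W t 0 := by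
  exact pushsum_error_bound' hn W hCS hOD hflow x0
end

section
/- In the random model with B-irreducible probability matrices, the random sequence {W(t)} has the directed infinite flow property almost surely. -/
open Finset MeasureTheory

/-- The random column-stochastic matrix built from the Bernoulli variables `R`:
`W(t)(ω)_{ij} = R_{ij}(t)(ω) / ∑_k R_{kj}(t)(ω)`. -/
noncomputable def Wof {n : ℕ} {Ω : Type*} (R : ℕ → Fin n → Fin n → Ω → ℝ)
    (t : ℕ) (ω : Ω) : Matrix (Fin n) (Fin n) ℝ :=
  fun i j => R t i j ω / ∑ k, R t k j ω

/-- Crossing lemma: a refl-trans path from outside `p` into `p` contains a crossing step. -/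
lemma aux_cross {α : Type*} {r : α → α → Prop} {p : α → Prop} :
    ∀ {a b : α}, Relation.ReflTransGen r a b → ¬ p a → p b →
      ∃ x y, ¬ p x ∧ p y ∧ r x y := by
  intro a b h
  induction h with
  | refl => exact fun h1 h2 => absurd h2 h1
  | @tail c d h' step ih =>
    intro ha hd
    by_cases hc : p c
    · exact ih ha hc
    · exact ⟨c, d, hc, hd, step⟩

open ProbabilityTheory in
/-- Preimages of measurable sets under an injectively reindexed independent family of
random variables form an independent family of sets. -/
lemma aux_iIndepSet_of_iIndepFun {Ω ι β : Type*} [DecidableEq ι] [MeasurableSpace Ω]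
    {μ : MeasureTheory.Measure Ω} [mβ : MeasurableSpace β]
    {f : ι → Ω → β}
    (hindep : iIndepFun (m := fun _ => mβ) f μ)
    (g : ℕ → ι) (hg : Function.Injective g)
    (T : ℕ → Set β) (hT : ∀ m, MeasurableSet (T m)) :
    iIndepSet (fun m => f (g m) ⁻¹' T m) μ := by
  rw [iIndepSet_iff]
  intro s' F H
  have Hc : ∀ m ∈ s', MeasurableSet[mβ.comap (f (g m))] (F m) := by
    intro m hm
    refine MeasurableSpace.generateFrom_le ?_ _ (H m hm)
    rintro t ht
    rw [Set.mem_singleton_iff] at ht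
    subst ht
    exact MeasurableSpace.measurableSet_comap.mpr ⟨T m, hT m, rfl⟩
  have key := (iIndepFun_iff _ _ _).mp hindep (s'.image g)
    (f' := Function.extend g F fun _ => Set.univ) ?_
  · have h1 : (⋂ p ∈ s'.image g, Function.extend g F (fun _ => Set.univ) p)
        = ⋂ m ∈ s', F m := by
      ext ω
      simp only [Set.mem_iInter, Finset.mem_image]
      constructor
      · intro h m hm
        have := h (g m) ⟨m, hm, rfl⟩
        rwa [hg.extend_apply] at this
      · rintro h p ⟨m, hm, rfl⟩
        rw [hg.extend_apply]; exact h m hm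
    have h2 : ∏ p ∈ s'.image g, μ (Function.extend g F (fun _ => Set.univ) p)
        = ∏ m ∈ s', μ (F m) := by
      rw [Finset.prod_image (fun x _ y _ h => hg h)]
      exact Finset.prod_congr rfl fun m _ => by rw [hg.extend_apply]
    rw [h1, h2] at key
    exact key
  · intro p hp
    rw [Finset.mem_image] at hp
    obtain ⟨m, hm, rfl⟩ := hp
    rw [hg.extend_apply]
    exact Hc m hm

/-- In the random model with B-irreducible probability matrices,
`{W(t)}` has the directed infinite flow property almost surely. -/
theorem random_model_DIFP
    {Ω : Type*} [MeasurableSpace Ω] (μ : MeasureTheory.Measure Ω)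
    [MeasureTheory.IsProbabilityMeasure μ]
    {n : ℕ} (hn : 2 ≤ n) (ε : ℝ) (hε : 0 < ε) (B : ℕ) (hB : 1 ≤ B)
    (P : ℕ → Matrix (Fin n) (Fin n) ℝ)
    (hP01 : ∀ t i j, P t i j ∈ Set.Icc (0:ℝ) 1)
    (hPdiag : ∀ t i, P t i i = 1)
    (hPeps : ∀ t i j, P t i j ≠ 0 → ε ≤ P t i j)
    (hPirr : ∀ t : ℕ, IrreducibleMat (∑ t' ∈ Finset.Ico (t * B) ((t + 1) * B), P t'))
    (R : ℕ → Fin n → Fin n → Ω → ℝ)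
    (hRmeas : ∀ t i j, Measurable (R t i j))
    (hR01 : ∀ t i j ω, R t i j ω = 0 ∨ R t i j ω = 1)
    (hRP : ∀ t i j, μ {ω | R t i j ω = 1} = ENNReal.ofReal (P t i j))
    (hindep : ProbabilityTheory.iIndepFun
      (m := fun _ : ℕ × Fin n × Fin n => Real.measurableSpace)
      (fun p ω => R p.1 p.2.1 p.2.2 ω) μ)
    :
    ∀ᵐ ω ∂μ, DirectedInfiniteFlow (fun t => Wof R t ω) := by
  classical
  have hnpos : (0:ℝ) < n := by
    have : 0 < n := lt_of_lt_of_le (by norm_num) hn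
    exact_mod_cast this
  -- choose crossing data in each block, for each nontrivial cut
  have exdata : ∀ (σ : {S : Finset (Fin n) // NontrivialSubset S}) (m : ℕ),
      ∃ t' : ℕ, ∃ i j : Fin n,
        ((m * B ≤ t' ∧ t' < (m + 1) * B) ∧ i ∈ σ.1 ∧ j ∉ σ.1) ∧ ε ≤ P t' i j := by
    rintro ⟨S, hS1, hS2⟩ m
    obtain ⟨i0, hi0⟩ := hS1
    obtain ⟨j0, hj0⟩ : ∃ j0, j0 ∉ S := by
      by_contra hcon
      push_neg at hcon
      exact hS2 (Finset.eq_univ_iff_forall.mpr hcon)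
    obtain ⟨x, y, hx, hy, hxy⟩ :=
      aux_cross (p := fun a => a ∈ S) (hPirr m j0 i0) hj0 hi0
    have hsum : (0:ℝ) < ∑ t' ∈ Finset.Ico (m * B) ((m + 1) * B), P t' y x := by
      simpa [Matrix.sum_apply, Finset.sum_apply] using hxy
    obtain ⟨t', ht', hpos⟩ : ∃ t' ∈ Finset.Ico (m * B) ((m + 1) * B), 0 < P t' y x := by
      by_contra hcon
      push_neg at hcon
      exact absurd (Finset.sum_nonpos hcon) (not_le.mpr hsum)
    rw [Finset.mem_Ico] at ht'
    exact ⟨t', y, x, ⟨ht', hy, hx⟩, hPeps _ _ _ hpos.ne'⟩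
  choose tt ii jj hdata hεP using exdata
  have hblk1 : ∀ σ m, m * B ≤ tt σ m := fun σ m => (hdata σ m).1.1
  have hblk2 : ∀ σ m, tt σ m < (m + 1) * B := fun σ m => (hdata σ m).1.2
  have hiS : ∀ σ m, ii σ m ∈ σ.1 := fun σ m => (hdata σ m).2.1
  have hjS : ∀ σ m, jj σ m ∉ σ.1 := fun σ m => (hdata σ m).2.2
  have htmono : ∀ σ, StrictMono (tt σ) := by
    intro σ m m' hlt
    exact lt_of_lt_of_le (hblk2 σ m)
      (le_trans (Nat.mul_le_mul_right B hlt) (hblk1 σ m'))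
  set E : {S : Finset (Fin n) // NontrivialSubset S} → ℕ → Set Ω :=
    fun σ m => {ω | R (tt σ m) (ii σ m) (jj σ m) ω = 1} with hE
  have hEmeas : ∀ σ m, MeasurableSet (E σ m) :=
    fun σ m => hRmeas _ _ _ (measurableSet_singleton 1)
  have hEindep : ∀ σ, ProbabilityTheory.iIndepSet (E σ) μ := by
    intro σ
    exact aux_iIndepSet_of_iIndepFun hindep (fun m => (tt σ m, ii σ m, jj σ m))
      (fun m m' h => (htmono σ).injective (congrArg Prod.fst h)) (fun _ => {1})
      (fun _ => measurableSet_singleton 1)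
  have hEsum : ∀ σ, (∑' m, μ (E σ m)) = ⊤ := by
    intro σ
    rw [eq_top_iff]
    calc (⊤ : ENNReal) = ∑' _ : ℕ, ENNReal.ofReal ε :=
          (ENNReal.tsum_const_eq_top_of_ne_zero (ENNReal.ofReal_pos.mpr hε).ne').symm
      _ ≤ ∑' m, μ (E σ m) := by
          refine ENNReal.tsum_le_tsum fun m => ?_
          have : μ (E σ m) = ENNReal.ofReal (P (tt σ m) (ii σ m) (jj σ m)) := hRP _ _ _
          rw [this]
          exact ENNReal.ofReal_le_ofReal (hεP σ m)
  have hlim : ∀ σ, ∀ᵐ ω ∂μ, ω ∈ Filter.limsup (E σ) Filter.atTop := by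
    intro σ
    have h1 := ProbabilityTheory.measure_limsup_eq_one (hEmeas σ) (hEindep σ) (hEsum σ)
    have h2 : μ (Filter.limsup (E σ) Filter.atTop)ᶜ = 0 :=
      (prob_compl_eq_zero_iff (MeasurableSet.measurableSet_limsup (hEmeas σ))).mpr h1
    rw [MeasureTheory.ae_iff]
    exact h2
  have hall : ∀ᵐ ω ∂μ, ∀ σ : {S : Finset (Fin n) // NontrivialSubset S},
      ω ∈ Filter.limsup (E σ) Filter.atTop := MeasureTheory.ae_all_iff.mpr hlim
  have hdiag : ∀ᵐ ω ∂μ, ∀ (t : ℕ) (j : Fin n), R t j j ω = 1 := by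
    rw [MeasureTheory.ae_all_iff]
    intro t
    rw [MeasureTheory.ae_all_iff]
    intro j
    have h1 : μ {ω | R t j j ω = 1} = 1 := by
      rw [hRP, hPdiag]; simp
    have hm : MeasurableSet {ω | R t j j ω = 1} :=
      hRmeas t j j (measurableSet_singleton 1)
    rw [MeasureTheory.ae_iff]
    exact (prob_compl_eq_zero_iff hm).mpr h1
  filter_upwards [hall, hdiag] with ω hω hd
  intro S hS
  set σ : {S : Finset (Fin n) // NontrivialSubset S} := ⟨S, hS⟩ with hσ
  have hR01' : ∀ t i j, (0:ℝ) ≤ R t i j ω := by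
    intro t i j; rcases hR01 t i j ω with h | h <;> simp [h]
  have hdenpos : ∀ (t : ℕ) (j : Fin n), (1:ℝ) ≤ ∑ k, R t k j ω := by
    intro t j
    have := Finset.single_le_sum (f := fun k => R t k j ω)
      (fun k _ => hR01' t k j) (Finset.mem_univ j)
    simpa [hd t j] using this
  have hdenle : ∀ (t : ℕ) (j : Fin n), (∑ k, R t k j ω) ≤ n := by
    intro t j
    calc (∑ k, R t k j ω) ≤ ∑ _k : Fin n, (1:ℝ) :=
          Finset.sum_le_sum fun k _ => by rcases hR01 t k j ω with h | h <;> simp [h]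
      _ = n := by simp
  have hWnn : ∀ t i j, 0 ≤ Wof R t ω i j := fun t i j =>
    div_nonneg (hR01' t i j) (le_trans zero_le_one (hdenpos t j))
  have hflow_nn : ∀ t, 0 ≤ flowSum (Wof R t ω) S := fun t =>
    Finset.sum_nonneg fun i _ => Finset.sum_nonneg fun j _ => hWnn t i j
  have hWlb : ∀ t i j, R t i j ω = 1 → 1 / (n:ℝ) ≤ Wof R t ω i j := by
    intro t i j h1
    have hpos : (0:ℝ) < ∑ k, R t k j ω := lt_of_lt_of_le one_pos (hdenpos t j)
    have heq : Wof R t ω i j = 1 / ∑ k, R t k j ω := by simp [Wof, h1]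
    rw [heq]
    exact one_div_le_one_div_of_le hpos (hdenle t j)
  have hflow_lb : ∀ m, ω ∈ E σ m → 1 / (n:ℝ) ≤ flowSum (Wof R (tt σ m) ω) S := by
    intro m hm
    calc 1 / (n:ℝ) ≤ Wof R (tt σ m) ω (ii σ m) (jj σ m) := hWlb _ _ _ hm
      _ ≤ ∑ j ∈ Sᶜ, Wof R (tt σ m) ω (ii σ m) j :=
          Finset.single_le_sum (fun j _ => hWnn _ _ j)
            (Finset.mem_compl.mpr (hjS σ m))
      _ ≤ flowSum (Wof R (tt σ m) ω) S :=
          Finset.single_le_sum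
            (f := fun i => ∑ j ∈ Sᶜ, Wof R (tt σ m) ω i j)
            (fun i _ => Finset.sum_nonneg fun j _ => hWnn _ i j) (hiS σ m)
  have hfreq : {m | ω ∈ E σ m}.Infinite :=
    Nat.frequently_atTop_iff_infinite.mp
      (Filter.mem_limsup_iff_frequently_mem.mp (hω σ))
  refine Filter.tendsto_atTop_atTop_of_monotone ?_ ?_
  · intro a b hab
    exact Finset.sum_le_sum_of_subset_of_nonneg (Finset.range_subset_range.mpr hab)
      fun t _ _ => hflow_nn t
  · intro c
    obtain ⟨N, hN⟩ := exists_nat_ge (c * n)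
    obtain ⟨K, hKsub, hKcard⟩ := hfreq.exists_subset_card_eq N
    refine ⟨K.sup (tt σ) + 1, ?_⟩
    have himg : K.image (tt σ) ⊆ Finset.range (K.sup (tt σ) + 1) := by
      intro t ht
      rw [Finset.mem_image] at ht
      obtain ⟨m, hm, rfl⟩ := ht
      exact Finset.mem_range.mpr (Nat.lt_succ_of_le (Finset.le_sup hm))
    calc c ≤ (N : ℝ) / n := (le_div_iff₀ hnpos).mpr hN
      _ = ∑ _m ∈ K, 1 / (n:ℝ) := by
          rw [Finset.sum_const, hKcard, nsmul_eq_mul]; ring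
      _ ≤ ∑ m ∈ K, flowSum (Wof R (tt σ m) ω) S :=
          Finset.sum_le_sum fun m hm => hflow_lb m (hKsub hm)
      _ = ∑ t ∈ K.image (tt σ), flowSum (Wof R t ω) S :=
          (Finset.sum_image (f := fun t => flowSum (Wof R t ω) S)
            fun x _ y _ h => (htmono σ).injective h).symm
      _ ≤ ∑ t ∈ Finset.range (K.sup (tt σ) + 1), flowSum (Wof R t ω) S :=
          Finset.sum_le_sum_of_subset_of_nonneg himg fun t _ _ => hflow_nn t
end

section
/- In the random model with B-irreducible probability matrices, for every t ≥ 0 the probability that the matrix Σ_{t'=tB}^{(t+1)B−1} W(t') is irreducible is at least ε^{2(n−1)}. -/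
open Finset MeasureTheory

/-- Paths of given length. -/
def pLen {α : Type*} (G : α → α → Prop) : ℕ → α → α → Prop
  | 0, a, b => a = b
  | k + 1, a, b => ∃ c, pLen G k a c ∧ G c b

lemma reflTransGen_pLen {α : Type*} {G : α → α → Prop} {a b : α}
    (h : Relation.ReflTransGen G a b) : ∃ k, pLen G k a b := by
  induction h with
  | refl => exact ⟨0, rfl⟩
  | tail hab hbc ih => obtain ⟨k, hk⟩ := ih; exact ⟨k + 1, _, hk, hbc⟩

lemma exists_spanning {n : ℕ} (G : Fin n → Fin n → Prop) (r : Fin n)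
    (h : ∀ v, Relation.ReflTransGen G r v) :
    ∃ F : Finset (Fin n × Fin n), F.card ≤ n - 1 ∧ (∀ e ∈ F, G e.1 e.2) ∧
      ∀ v, Relation.ReflTransGen (fun a b => (a, b) ∈ F) r v := by
  classical
  have hex : ∀ v, ∃ k, pLen G k r v := fun v => reflTransGen_pLen (h v)
  set d : Fin n → ℕ := fun v => Nat.find (hex v) with hd_def
  have hd : ∀ v, pLen G (d v) r v := fun v => Nat.find_spec (hex v)
  have key : ∀ v, ∃ c, v ≠ r → G c v ∧ d c < d v := by
    intro v
    by_cases hv : v = r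
    · exact ⟨v, fun h => absurd hv h⟩
    · have hpv := hd v
      cases hdv : d v with
      | zero =>
        rw [hdv] at hpv
        exact absurd hpv.symm hv
      | succ k =>
        rw [hdv] at hpv
        obtain ⟨c, hc1, hc2⟩ := hpv
        refine ⟨c, fun _ => ⟨hc2, ?_⟩⟩
        have : d c ≤ k := Nat.find_min' (hex c) hc1
        omega
  choose po hpo using key
  refine ⟨(Finset.univ.erase r).image (fun v => (po v, v)), ?_, ?_, ?_⟩
  · calc ((Finset.univ.erase r).image (fun v => (po v, v))).card
        ≤ (Finset.univ.erase r).card := Finset.card_image_le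
      _ = n - 1 := by rw [Finset.card_erase_of_mem (Finset.mem_univ r)]; simp
  · intro e he
    obtain ⟨v, hv, rfl⟩ := Finset.mem_image.mp he
    exact (hpo v (Finset.mem_erase.mp hv).1).1
  · have reach : ∀ k v, d v ≤ k →
        Relation.ReflTransGen
          (fun a b => (a, b) ∈ (Finset.univ.erase r).image (fun v => (po v, v))) r v := by
      intro k
      induction k with
      | zero =>
        intro v hv
        have h0 : d v = 0 := Nat.le_zero.mp hv
        have := hd v
        rw [h0] at this
        exact this ▸ Relation.ReflTransGen.refl
      | succ k ih =>
        intro v hv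
        by_cases hvr : v = r
        · exact hvr ▸ Relation.ReflTransGen.refl
        · obtain ⟨hG, hdlt⟩ := hpo v hvr
          have : d (po v) ≤ k := by omega
          refine (ih _ this).tail ?_
          exact Finset.mem_image.mpr ⟨v, Finset.mem_erase.mpr ⟨hvr, Finset.mem_univ v⟩, rfl⟩
    exact fun v => reach (d v) v le_rfl

/-- In the random model, for every `t ≥ 0`, the probability that
`∑_{t'=tB}^{(t+1)B-1} W(t')` is irreducible is at least `ε^{2(n-1)}`. -/
theorem random_model_irreducible_prob
    {Ω : Type*} [MeasurableSpace Ω] (μ : MeasureTheory.Measure Ω)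
    [MeasureTheory.IsProbabilityMeasure μ]
    {n : ℕ} (hn : 2 ≤ n) (ε : ℝ) (hε : 0 < ε) (B : ℕ) (hB : 1 ≤ B)
    (P : ℕ → Matrix (Fin n) (Fin n) ℝ)
    (hP01 : ∀ t i j, P t i j ∈ Set.Icc (0:ℝ) 1)
    (hPdiag : ∀ t i, P t i i = 1)
    (hPeps : ∀ t i j, P t i j ≠ 0 → ε ≤ P t i j)
    (hPirr : ∀ t : ℕ, IrreducibleMat (∑ t' ∈ Finset.Ico (t * B) ((t + 1) * B), P t'))
    (R : ℕ → Fin n → Fin n → Ω → ℝ)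
    (hRmeas : ∀ t i j, Measurable (R t i j))
    (hR01 : ∀ t i j ω, R t i j ω = 0 ∨ R t i j ω = 1)
    (hRP : ∀ t i j, μ {ω | R t i j ω = 1} = ENNReal.ofReal (P t i j))
    (hindep : ProbabilityTheory.iIndepFun
      (m := fun _ : ℕ × Fin n × Fin n => Real.measurableSpace)
      (fun p ω => R p.1 p.2.1 p.2.2 ω) μ)
    :
    ∀ t : ℕ, ENNReal.ofReal (ε ^ (2 * (n - 1))) ≤
      μ {ω | IrreducibleMat (∑ t' ∈ Finset.Ico (t * B) ((t + 1) * B), Wof R t' ω)} := by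
  
  classical
  intro t
  set I : Finset ℕ := Finset.Ico (t * B) ((t + 1) * B) with hI
  set A : Matrix (Fin n) (Fin n) ℝ := ∑ t' ∈ I, P t' with hA
  have hAapp : ∀ i j, A i j = ∑ t' ∈ I, P t' i j := by
    intro i j; rw [hA]; simp [Matrix.sum_apply]
  have hr0 : 0 < n := by omega
  set r : Fin n := ⟨0, hr0⟩ with hr
  have hε1 : ε ≤ 1 := by
    have h1 := hPeps 0 r r (by rw [hPdiag]; norm_num)
    rw [hPdiag] at h1; exact h1
  -- spanning out-tree and in-tree
  obtain ⟨F1, hF1c, hF1e, hF1r⟩ := exists_spanning (fun a b => 0 < A b a) r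
    (fun v => hPirr t r v)
  obtain ⟨F2, hF2c, hF2e, hF2r⟩ := exists_spanning (Function.swap (fun a b => 0 < A b a)) r
    (fun v => Relation.reflTransGen_swap.mpr (hPirr t v r))
  set Eall : Finset (Fin n × Fin n) := F1 ∪ F2.image Prod.swap with hEall
  have hEe : ∀ e ∈ Eall, 0 < A e.2 e.1 := by
    intro e he
    rcases Finset.mem_union.mp he with h | h
    · exact hF1e e h
    · obtain ⟨f, hf, rfl⟩ := Finset.mem_image.mp h
      exact hF2e f hf
  have hEc : Eall.card ≤ 2 * (n - 1) := by
    calc Eall.card ≤ F1.card + (F2.image Prod.swap).card := Finset.card_union_le _ _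
      _ ≤ F1.card + F2.card := add_le_add le_rfl Finset.card_image_le
      _ ≤ 2 * (n - 1) := by omega
  -- choose times
  have hτex : ∀ e : Fin n × Fin n, ∃ s, e ∈ Eall → s ∈ I ∧ 0 < P s e.2 e.1 := by
    intro e
    by_cases he : e ∈ Eall
    · have := hEe e he
      rw [hAapp] at this
      have h2 : ∃ s ∈ I, (0 : ℝ) < P s e.2 e.1 := by
        by_contra hc
        push_neg at hc
        have : ∑ t' ∈ I, P t' e.2 e.1 ≤ 0 := Finset.sum_nonpos hc
        linarith
      obtain ⟨s, hs1, hs2⟩ := h2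
      exact ⟨s, fun _ => ⟨hs1, hs2⟩⟩
    · exact ⟨0, fun h => absurd h he⟩
  choose τ hτ using hτex
  set TF : Finset (ℕ × Fin n × Fin n) := Eall.image (fun e => (τ e, e.2, e.1)) with hTF
  have hTFc : TF.card ≤ 2 * (n - 1) := le_trans Finset.card_image_le hEc
  set Eev : Set Ω := ⋂ p ∈ TF, (fun ω => R p.1 p.2.1 p.2.2 ω) ⁻¹' {1} with hEev
  -- Step A: inclusion
  have hsub : Eev ⊆ {ω | IrreducibleMat (∑ t' ∈ I, Wof R t' ω)} := by
    intro ω hω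
    have hmem : ∀ p ∈ TF, R p.1 p.2.1 p.2.2 ω = 1 := by
      intro p hp
      have := Set.mem_iInter₂.mp hω p hp
      simpa using this
    set M : Matrix (Fin n) (Fin n) ℝ := ∑ t' ∈ I, Wof R t' ω with hM
    have hMapp : ∀ i j, M i j = ∑ t' ∈ I, Wof R t' ω i j := by
      intro i j; rw [hM]; simp [Matrix.sum_apply]
    have hWnn : ∀ s i j, 0 ≤ Wof R s ω i j := by
      intro s i j
      apply div_nonneg
      · rcases hR01 s i j ω with h | h <;> rw [h] <;> norm_num
      · apply Finset.sum_nonneg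
        intro k _
        rcases hR01 s k j ω with h | h <;> rw [h] <;> norm_num
    have hpos : ∀ e ∈ Eall, 0 < M e.2 e.1 := by
      intro e he
      have hp : (τ e, e.2, e.1) ∈ TF := Finset.mem_image.mpr ⟨e, he, rfl⟩
      have hR1 : R (τ e) e.2 e.1 ω = 1 := hmem _ hp
      have hden : (1 : ℝ) ≤ ∑ k, R (τ e) k e.1 ω := by
        calc (1 : ℝ) = R (τ e) e.2 e.1 ω := hR1.symm
          _ ≤ ∑ k, R (τ e) k e.1 ω := by
            apply Finset.single_le_sum (f := fun k => R (τ e) k e.1 ω) _ (Finset.mem_univ e.2)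
            intro k _
            show (0:ℝ) ≤ R (τ e) k e.1 ω
            rcases hR01 (τ e) k e.1 ω with h | h <;> rw [h] <;> norm_num
      have hWpos : 0 < Wof R (τ e) ω e.2 e.1 := by
        unfold Wof
        rw [hR1]
        positivity
      rw [hMapp]
      exact Finset.sum_pos' (fun s _ => hWnn s e.2 e.1) ⟨τ e, (hτ e he).1, hWpos⟩
    intro i j
    have r1 : Relation.ReflTransGen (fun a b => 0 < M b a) r j :=
      Relation.ReflTransGen.mono (fun a b h => hpos (a, b) (Finset.mem_union_left _ h)) _ _ (hF1r j)
    have r2 : Relation.ReflTransGen (fun a b => 0 < M b a) i r := by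
      have := Relation.reflTransGen_swap.mpr (hF2r i)
      exact Relation.ReflTransGen.mono (fun a b h => hpos (a, b)
        (Finset.mem_union_right _ (Finset.mem_image.mpr ⟨(b, a), h, rfl⟩))) _ _ this
    exact r2.trans r1
  -- Step B: measure bound
  have hmeas : μ Eev = ∏ p ∈ TF, μ ((fun ω => R p.1 p.2.1 p.2.2 ω) ⁻¹' {1}) := by
    rw [hEev]
    exact hindep.meas_biInter (fun p _ => ⟨{1}, measurableSet_singleton 1, rfl⟩)
  have hval : ∀ p ∈ TF, μ ((fun ω => R p.1 p.2.1 p.2.2 ω) ⁻¹' {1}) =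
      ENNReal.ofReal (P p.1 p.2.1 p.2.2) := by
    intro p _
    rw [← hRP p.1 p.2.1 p.2.2]
    rfl
  have hlow : ∀ p ∈ TF, ENNReal.ofReal ε ≤ μ ((fun ω => R p.1 p.2.1 p.2.2 ω) ⁻¹' {1}) := by
    intro p hp
    rw [hval p hp]
    obtain ⟨e, he, rfl⟩ := Finset.mem_image.mp hp
    exact ENNReal.ofReal_le_ofReal (hPeps _ _ _ (ne_of_gt (hτ e he).2))
  calc ENNReal.ofReal (ε ^ (2 * (n - 1)))
      = (ENNReal.ofReal ε) ^ (2 * (n - 1)) := ENNReal.ofReal_pow hε.le _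
    _ ≤ (ENNReal.ofReal ε) ^ TF.card :=
        pow_le_pow_of_le_one (zero_le) (ENNReal.ofReal_le_one.mpr hε1) hTFc
    _ = ∏ _p ∈ TF, ENNReal.ofReal ε := (Finset.prod_const _).symm
    _ ≤ ∏ p ∈ TF, μ ((fun ω => R p.1 p.2.1 p.2.2 ω) ⁻¹' {1}) :=
        Finset.prod_le_prod' hlow
    _ = μ Eev := hmeas.symm
    _ ≤ μ {ω | IrreducibleMat (∑ t' ∈ I, Wof R t' ω)} := measure_mono hsub
end

section
/- In the random model with B-irreducible probability matrices, consider the push-sum iterates driven by {W(t)}. Then almost surely, for every t ≥ 0 there exists t' ≥ t such that y_i(t') ≥ 1/n^{nB} for all i ∈ [n]. -/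
open Finset MeasureTheory

private lemma cross_cut {n : ℕ} {r : Fin n → Fin n → Prop} {S : Finset (Fin n)} {x y : Fin n}
    (h : Relation.ReflTransGen r x y) (hx : x ∈ S) :
    y ∉ S → ∃ u ∈ S, ∃ v, v ∉ S ∧ r u v := by
  induction h with
  | refl => exact fun hy => absurd hx hy
  | @tail b c hb hbc ih =>
    intro hy
    by_cases hbS : b ∈ S
    · exact ⟨b, hbS, c, hy, hbc⟩
    · exact ih hbS

private lemma det_core {n : ℕ} (hn : 2 ≤ n) {B : ℕ} (hB : 1 ≤ B)
    (W : ℕ → Matrix (Fin n) (Fin n) ℝ)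
    (hWnn : ∀ s i j, 0 ≤ W s i j)
    (hWcol : ∀ s j, ∑ i, W s i j = 1)
    (hWdiag : ∀ s j, 1/(n:ℝ) ≤ W s j j)
    (P : ℕ → Matrix (Fin n) (Fin n) ℝ)
    (a : ℕ)
    (hirr : ∀ q < n, IrreducibleMat (∑ t ∈ Finset.Ico (a + q*B) (a + q*B + B), P t))
    (hfire : ∀ t, a ≤ t → t < a + n*B → ∀ i j, P t i j ≠ 0 → 1/(n:ℝ) ≤ W t i j) :
    ∀ i, 1/(n:ℝ)^(n*B) ≤ pushIter W (fun _ => 1) (a + n*B) i := by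
  have hn0 : (0:ℝ) < n := by positivity
  set y : ℕ → Fin n → ℝ := pushIter W (fun _ => 1) with hy
  have hstepdef : ∀ t i, y (t+1) i = ∑ j, W t i j * y t j := by
    intro t i
    show ((W t).mulVec (y t)) i = _
    simp [Matrix.mulVec, dotProduct]
  have hynn : ∀ t i, 0 ≤ y t i := by
    intro t
    induction t with
    | zero => intro i; norm_num [hy, pushIter]
    | succ t ih =>
      intro i
      rw [hstepdef]
      exact Finset.sum_nonneg fun j _ => mul_nonneg (hWnn t i j) (ih j)
  have hysum : ∀ t, ∑ i, y t i = n := by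
    intro t
    induction t with
    | zero => simp [hy, pushIter]
    | succ t ih =>
      calc ∑ i, y (t+1) i = ∑ i, ∑ j, W t i j * y t j := by simp [hstepdef]
        _ = ∑ j, (∑ i, W t i j) * y t j := by rw [Finset.sum_comm]; simp [Finset.sum_mul]
        _ = ∑ j, y t j := by simp [hWcol]
        _ = n := ih
  have hstep : ∀ s i k, 1/(n:ℝ) ≤ W s i k → y s k / n ≤ y (s+1) i := by
    intro s i k hw
    rw [hstepdef]
    calc y s k / n = (1/(n:ℝ)) * y s k := by ring
      _ ≤ W s i k * y s k := mul_le_mul_of_nonneg_right hw (hynn s k)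
      _ ≤ ∑ j, W s i j * y s j :=
        Finset.single_le_sum (fun j _ => mul_nonneg (hWnn s i j) (hynn s j)) (mem_univ k)
  have hdiagstep : ∀ s d k, y s k / (n:ℝ)^d ≤ y (s+d) k := by
    intro s d k
    induction d with
    | zero => simp
    | succ d ih =>
      have h1 : y (s+d) k / n ≤ y (s+d+1) k := hstep (s+d) k k (hWdiag (s+d) k)
      calc y s k / (n:ℝ)^(d+1) = (y s k / (n:ℝ)^d) / n := by rw [pow_succ, div_div]
        _ ≤ y (s+d) k / n := div_le_div_of_nonneg_right ih hn0.le
        _ ≤ y (s+d+1) k := h1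
        _ = y (s+(d+1)) k := rfl
  have hwin : ∀ q, q < n → ∀ S : Finset (Fin n), S.Nonempty → S ≠ Finset.univ →
      ∀ c : ℝ, (∀ k ∈ S, c ≤ y (a + q*B) k) →
      ∃ v ∉ S, ∀ k ∈ insert v S, c / (n:ℝ)^B ≤ y (a + (q+1)*B) k := by
    intro q hq S hS hSU c hc
    obtain ⟨u0, hu0⟩ := hS
    obtain ⟨v0, hv0⟩ : ∃ v0, v0 ∉ S := by
      by_contra h
      push_neg at h
      exact hSU (Finset.eq_univ_iff_forall.2 h)
    obtain ⟨u, huS, v, hvS, hA⟩ := cross_cut (hirr q hq u0 v0) hu0 hv0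
    have hA' : 0 < ∑ t ∈ Finset.Ico (a + q*B) (a + q*B + B), P t v u := by
      simpa [Matrix.sum_apply] using hA
    obtain ⟨t, htmem, htpos⟩ : ∃ t ∈ Finset.Ico (a + q*B) (a + q*B + B), 0 < P t v u := by
      by_contra h
      push_neg at h
      exact absurd (Finset.sum_nonpos h) (not_le.2 hA')
    rw [Finset.mem_Ico] at htmem
    obtain ⟨e, rfl, helt⟩ : ∃ e, t = a + q*B + e ∧ e < B := ⟨t - (a+q*B), by omega, by omega⟩
    set t := a + q*B + e
    have hwtv : 1/(n:ℝ) ≤ W t v u := by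
      refine hfire t (by omega) (by nlinarith [hq, hB]) v u (ne_of_gt htpos)
    have h1 : c / (n:ℝ)^e ≤ y t u := by
      refine le_trans ?_ (hdiagstep (a + q*B) e u)
      exact div_le_div_of_nonneg_right (hc u huS) (by positivity)
    have h2 : c / (n:ℝ)^(e+1) ≤ y (t+1) v := by
      refine le_trans ?_ (hstep t v u hwtv)
      rw [pow_succ, ← div_div]
      exact div_le_div_of_nonneg_right h1 hn0.le
    refine ⟨v, hvS, ?_⟩
    intro k hk
    rcases Finset.mem_insert.1 hk with rfl | hkS
    · have h3 := hdiagstep (t+1) (B-e-1) k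
      have harith : t + 1 + (B - e - 1) = a + (q+1)*B := by
        simp only [t]; ring_nf; omega
      rw [harith] at h3
      refine le_trans ?_ (le_trans (div_le_div_of_nonneg_right h2 (by positivity)) h3)
      rw [div_div, ← pow_add]
      rw [show e + 1 + (B - e - 1) = B by omega]
    · have h3 := hdiagstep (a + q*B) B k
      have harith : a + q*B + B = a + (q+1)*B := by ring
      rw [harith] at h3
      exact le_trans (div_le_div_of_nonneg_right (hc k hkS) (by positivity)) h3
  haveI : NeZero n := ⟨by omega⟩
  obtain ⟨j0, hj0⟩ : ∃ j, (1:ℝ) ≤ y a j := by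
    by_contra h
    push_neg at h
    have : ∑ i, y a i < ∑ i : Fin n, (1:ℝ) :=
      Finset.sum_lt_sum_of_nonempty Finset.univ_nonempty (fun i _ => h i)
    rw [hysum] at this
    simp at this
  have hchain : ∀ q, q ≤ n → ∃ S : Finset (Fin n), S.Nonempty ∧
      (q + 1 ≤ S.card ∨ S = Finset.univ) ∧
      ∀ k ∈ S, 1/(n:ℝ)^(q*B) ≤ y (a + q*B) k := by
    intro q
    induction q with
    | zero =>
      intro _
      exact ⟨{j0}, Finset.singleton_nonempty _, Or.inl (by simp), by
        intro k hk
        rw [Finset.mem_singleton] at hk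
        subst hk
        simpa using hj0⟩
    | succ q ih =>
      intro hq1
      obtain ⟨S, hSne, hScard, hSy⟩ := ih (by omega)
      have hbound : (1:ℝ)/(n:ℝ)^(q*B) / (n:ℝ)^B = 1/(n:ℝ)^((q+1)*B) := by
        rw [div_div, ← pow_add]
        congr 2
        ring
      by_cases hSU : S = Finset.univ
      · refine ⟨Finset.univ, Finset.univ_nonempty, Or.inr rfl, ?_⟩
        intro k _
        have h3 := hdiagstep (a + q*B) B k
        rw [show a + q*B + B = a + (q+1)*B by ring] at h3
        refine le_trans ?_ (le_trans (div_le_div_of_nonneg_right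
          (hSy k (hSU ▸ Finset.mem_univ k)) (by positivity)) h3)
        rw [hbound]
      · obtain ⟨v, hvS, hv⟩ := hwin q (by omega) S hSne hSU _ hSy
        refine ⟨insert v S, Finset.insert_nonempty _ _, ?_, ?_⟩
        · left
          rw [Finset.card_insert_of_notMem hvS]
          rcases hScard with h | h
          · omega
          · exfalso; exact hvS (h ▸ Finset.mem_univ v)
        · intro k hk
          have := hv k hk
          rwa [hbound] at this
  obtain ⟨S, _, hScard, hSy⟩ := hchain n le_rfl
  have hSU : S = Finset.univ := by
    rcases hScard with h | h
    · exfalso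
      have := Finset.card_le_univ S
      simp [Fintype.card_fin] at this
      omega
    · exact h
  intro i
  exact hSy i (hSU ▸ Finset.mem_univ i)

private lemma wof_facts {n : ℕ} {Ω : Type*} (R : ℕ → Fin n → Fin n → Ω → ℝ) (ω : Ω)
    (hn : 2 ≤ n)
    (h01 : ∀ t i j, R t i j ω = 0 ∨ R t i j ω = 1)
    (hdiag : ∀ t j, R t j j ω = 1) :
    (∀ s i j, 0 ≤ Wof R s ω i j) ∧ (∀ s j, ∑ i, Wof R s ω i j = 1) ∧
      (∀ s i j, R s i j ω = 1 → 1/(n:ℝ) ≤ Wof R s ω i j) := by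
  have hRnn : ∀ t i j, 0 ≤ R t i j ω := by
    intro t i j; rcases h01 t i j with h | h <;> rw [h] <;> norm_num
  have hRle1 : ∀ t i j, R t i j ω ≤ 1 := by
    intro t i j; rcases h01 t i j with h | h <;> rw [h] <;> norm_num
  have hd1 : ∀ s j, (1:ℝ) ≤ ∑ k, R s k j ω := by
    intro s j
    have := Finset.single_le_sum (f := fun k => R s k j ω)
      (fun k _ => hRnn s k j) (Finset.mem_univ j)
    rwa [hdiag s j] at this
  have hdn : ∀ s j, ∑ k, R s k j ω ≤ (n:ℝ) := by
    intro s j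
    calc ∑ k, R s k j ω ≤ ∑ _k : Fin n, (1:ℝ) := Finset.sum_le_sum (fun k _ => hRle1 s k j)
      _ = n := by simp
  refine ⟨?_, ?_, ?_⟩
  · intro s i j
    exact div_nonneg (hRnn s i j) (le_trans zero_le_one (hd1 s j))
  · intro s j
    show (∑ i, R s i j ω / ∑ k, R s k j ω) = 1
    rw [← Finset.sum_div]
    exact div_self (by linarith [hd1 s j])
  · intro s i j h
    show 1/(n:ℝ) ≤ R s i j ω / ∑ k, R s k j ω
    rw [h]
    exact one_div_le_one_div_of_le (by linarith [hd1 s j]) (hdn s j)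

/-- In the random model, almost surely, for every `t` there is
`t' ≥ t` with `y_i(t') ≥ 1/n^{nB}` for all `i`. -/
theorem random_model_y_lower_bound
    {Ω : Type*} [MeasurableSpace Ω] (μ : MeasureTheory.Measure Ω)
    [MeasureTheory.IsProbabilityMeasure μ]
    {n : ℕ} (hn : 2 ≤ n) (ε : ℝ) (hε : 0 < ε) (B : ℕ) (hB : 1 ≤ B)
    (P : ℕ → Matrix (Fin n) (Fin n) ℝ)
    (hP01 : ∀ t i j, P t i j ∈ Set.Icc (0:ℝ) 1)
    (hPdiag : ∀ t i, P t i i = 1)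
    (hPeps : ∀ t i j, P t i j ≠ 0 → ε ≤ P t i j)
    (hPirr : ∀ t : ℕ, IrreducibleMat (∑ t' ∈ Finset.Ico (t * B) ((t + 1) * B), P t'))
    (R : ℕ → Fin n → Fin n → Ω → ℝ)
    (hRmeas : ∀ t i j, Measurable (R t i j))
    (hR01 : ∀ t i j ω, R t i j ω = 0 ∨ R t i j ω = 1)
    (hRP : ∀ t i j, μ {ω | R t i j ω = 1} = ENNReal.ofReal (P t i j))
    (hindep : ProbabilityTheory.iIndepFun
      (m := fun _ : ℕ × Fin n × Fin n => Real.measurableSpace)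
      (fun p ω => R p.1 p.2.1 p.2.2 ω) μ)
    :
    ∀ᵐ ω ∂μ, ∀ t : ℕ, ∃ t', t ≤ t' ∧
      ∀ i, (1 : ℝ) / (n : ℝ) ^ (n * B) ≤
        pushIter (fun s => Wof R s ω) (fun _ => 1) t' i := by
  classical
  set ι := ℕ × Fin n × Fin n
  set A : ι → Set Ω := fun p => (fun ω => R p.1 p.2.1 p.2.2 ω) ⁻¹' {1} with hA
  have hAmeas : ∀ p : ι, MeasurableSet (A p) :=
    fun p => (hRmeas p.1 p.2.1 p.2.2) (measurableSet_singleton 1)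
  have hAval : ∀ p : ι, μ (A p) = ENNReal.ofReal (P p.1 p.2.1 p.2.2) := by
    intro p
    rw [← hRP p.1 p.2.1 p.2.2]
    rfl
  rw [ProbabilityTheory.iIndepFun_iff_measure_inter_preimage_eq_mul] at hindep
  have hprod : ∀ T : Finset ι, μ (⋂ p ∈ T, A p) = ∏ p ∈ T, μ (A p) := by
    intro T
    exact hindep T (sets := fun _ => ({1} : Set ℝ)) (fun i _ => measurableSet_singleton 1)
  set T : ℕ → Finset ι := fun m =>
    ((Finset.Ico (m*(n*B)) ((m+1)*(n*B))) ×ˢ (Finset.univ : Finset (Fin n × Fin n))).filter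
      (fun p => P p.1 p.2.1 p.2.2 ≠ 0) with hT
  set E : ℕ → Set Ω := fun m => ⋂ p ∈ T m, A p with hE
  have hEmeas : ∀ m, MeasurableSet (E m) :=
    fun m => Finset.measurableSet_biInter (T m) (fun p _ => hAmeas p)
  have hdisj : ∀ m m' : ℕ, m ≠ m' → Disjoint (T m) (T m') := by
    intro m m' hmm
    rw [Finset.disjoint_left]
    intro p hp hp'
    have h1 := (Finset.mem_product.1 (Finset.mem_filter.1 hp).1).1
    have h2 := (Finset.mem_product.1 (Finset.mem_filter.1 hp').1).1
    rw [Finset.mem_Ico] at h1 h2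
    rcases Nat.lt_or_ge m m' with h | h
    · have := Nat.mul_le_mul_right (n*B) (show m+1 ≤ m' by omega)
      omega
    · have hlt : m' < m := by omega
      have := Nat.mul_le_mul_right (n*B) (show m'+1 ≤ m by omega)
      omega
  have hEprob : ∀ m, μ (E m) = ∏ p ∈ T m, μ (A p) := fun m => hprod (T m)
  have hEindep : ProbabilityTheory.iIndepSet E μ := by
    rw [ProbabilityTheory.iIndepSet_iff_meas_biInter hEmeas]
    intro M
    have h1 : (⋂ m ∈ M, E m) = ⋂ p ∈ M.biUnion T, A p :=
      (Finset.set_biInter_biUnion M T A).symm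
    rw [h1, hprod, Finset.prod_biUnion (fun x _ y _ hxy => hdisj x y hxy)]
    exact Finset.prod_congr rfl (fun m _ => (hEprob m).symm)
  have hεle1 : ε ≤ 1 := by
    have h0 := hPeps 0 ⟨0, by omega⟩ ⟨0, by omega⟩ (by rw [hPdiag]; norm_num)
    have h1 := (hP01 0 ⟨0, by omega⟩ ⟨0, by omega⟩).2
    linarith
  set δ : ENNReal := (ENNReal.ofReal ε) ^ (n*B*(n*n)) with hδ
  have hδ0 : δ ≠ 0 := pow_ne_zero _ (by
    simp only [ne_eq, ENNReal.ofReal_eq_zero, not_le]; exact hε)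
  have hcard : ∀ m, (T m).card ≤ n*B*(n*n) := by
    intro m
    calc (T m).card ≤ ((Finset.Ico (m*(n*B)) ((m+1)*(n*B))) ×ˢ
        (Finset.univ : Finset (Fin n × Fin n))).card := Finset.card_filter_le _ _
      _ = (n*B) * (n*n) := by
          rw [Finset.card_product, Nat.card_Ico, Finset.card_univ, Fintype.card_prod,
            Fintype.card_fin]
          congr 1
          have : (m+1)*(n*B) = m*(n*B) + n*B := by ring
          omega
      _ ≤ n*B*(n*n) := le_refl _
  have hElb : ∀ m, δ ≤ μ (E m) := by
    intro m
    rw [hEprob m]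
    calc δ ≤ (ENNReal.ofReal ε) ^ (T m).card :=
        pow_le_pow_right_of_le_one' (ENNReal.ofReal_le_one.2 hεle1) (hcard m)
      _ = ∏ _p ∈ T m, ENNReal.ofReal ε := by rw [Finset.prod_const]
      _ ≤ ∏ p ∈ T m, μ (A p) := by
          refine Finset.prod_le_prod' (fun p hp => ?_)
          rw [hAval p]
          exact ENNReal.ofReal_le_ofReal (hPeps _ _ _ (Finset.mem_filter.1 hp).2)
  have htsum : (∑' m, μ (E m)) = ⊤ := by
    refine top_unique ?_
    calc (⊤ : ENNReal) = ∑' _ : ℕ, δ := (ENNReal.tsum_const_eq_top_of_ne_zero hδ0).symm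
      _ ≤ ∑' m, μ (E m) := ENNReal.tsum_le_tsum hElb
  have hBC : μ (Filter.limsup E Filter.atTop) = 1 :=
    ProbabilityTheory.measure_limsup_eq_one hEmeas hEindep htsum
  have h1 : ∀ᵐ ω ∂μ, ω ∈ Filter.limsup E Filter.atTop := by
    have hms : MeasurableSet (Filter.limsup E Filter.atTop) :=
      MeasurableSet.measurableSet_limsup hEmeas
    rw [MeasureTheory.ae_iff]
    have heq : {ω | ¬ ω ∈ Filter.limsup E Filter.atTop} = (Filter.limsup E Filter.atTop)ᶜ := rfl
    rw [heq, measure_compl hms (measure_ne_top μ _), hBC]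
    simp
  have h2 : ∀ᵐ ω ∂μ, ∀ t j, R t j j ω = 1 := by
    rw [MeasureTheory.ae_all_iff]
    intro t
    rw [MeasureTheory.ae_all_iff]
    intro j
    have hs : MeasurableSet {ω | R t j j ω = 1} := (hRmeas t j j) (measurableSet_singleton 1)
    rw [MeasureTheory.ae_iff]
    have heq : {ω | ¬ R t j j ω = 1} = {ω | R t j j ω = 1}ᶜ := rfl
    rw [heq, measure_compl hs (measure_ne_top μ _), hRP, hPdiag]
    simp
  refine (h1.and h2).mono ?_
  rintro ω ⟨hlim, hdiagω⟩ t
  obtain ⟨hWnn, hWcol, hWge⟩ := wof_facts R ω hn (fun t i j => hR01 t i j ω) hdiagω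
  obtain ⟨m, hmt, hmE⟩ := (Filter.frequently_atTop.1
    (Filter.mem_limsup_iff_frequently_mem.1 hlim)) t
  have hnB1 : 1 ≤ n * B := by nlinarith
  have htm : t ≤ m * (n*B) + n*B := by
    have : m * 1 ≤ m * (n*B) := Nat.mul_le_mul_left m hnB1
    omega
  refine ⟨m * (n*B) + n*B, htm, ?_⟩
  have hfire : ∀ s, m*(n*B) ≤ s → s < m*(n*B) + n*B →
      ∀ i j, P s i j ≠ 0 → 1/(n:ℝ) ≤ Wof R s ω i j := by
    intro s hs1 hs2 i j hPij
    apply hWge s i j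
    have hsub : s < (m+1)*(n*B) := by
      have : (m+1)*(n*B) = m*(n*B) + n*B := by ring
      omega
    have hmem : (⟨s, i, j⟩ : ι) ∈ T m :=
      Finset.mem_filter.2 ⟨Finset.mem_product.2
        ⟨Finset.mem_Ico.2 ⟨hs1, hsub⟩, Finset.mem_univ _⟩, hPij⟩
    have := Set.mem_iInter₂.1 hmE (⟨s, i, j⟩ : ι) hmem
    simpa [hA] using this
  have hirr : ∀ q < n, IrreducibleMat
      (∑ s ∈ Finset.Ico (m*(n*B) + q*B) (m*(n*B) + q*B + B), P s) := by
    intro q hq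
    have hIco : Finset.Ico (m*(n*B) + q*B) (m*(n*B) + q*B + B) =
        Finset.Ico ((m*n+q)*B) ((m*n+q+1)*B) := by
      congr 1 <;> ring
    rw [hIco]
    exact hPirr (m*n+q)
  have := det_core hn hB (fun s => Wof R s ω) hWnn hWcol
    (fun s j => hWge s j j (hdiagω s j)) P (m*(n*B)) hirr hfire
  exact this
end
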